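/- Let 𝒞 be an m×n array BP-XOR code over k information symbols v₁,...,v_k that is t-erasure tolerating and uses only degree one and degree two encoding symbols (each cell is a single v_i or the XOR of two distinct v_i). Then there exists a (t+1)-color connected edge-colored graph G(V,E,C,f) with |V| = k+1, |E| = mn, and |C| = n, where: V = {v₁,...,v_k,v_{k+1}}; each degree-two cell v_{i'} ⊕ v_{j'} in column j gives an edge ⟨v_{i'},v_{j'}⟩ colored c_j; each degree-one cell v_{i'} in column j gives an edge ⟨v_{k+1},v_{i'}⟩ colored c_j. -/

import Mathlib

/-- Peeling (belief propagation) recoverability of information symbols from cells. -/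
inductive Recoverable {ι : Type} (cells : Set (Finset ι)) : ι → Prop where
  | step (s : Finset ι) (hs : s ∈ cells) (i : ι) (hi : i ∈ s)
      (h : ∀ j ∈ s, j ≠ i → Recoverable cells j) : Recoverable cells i

/-- From an m×n t-erasure tolerating array BP-XOR code on k information symbols using
only degree one and two encoding symbols (cells given by their supports), one obtains a
(t+1)-color connected edge-colored graph on the k+1 vertices Fin (k+1) (vertex
`Fin.last k` playing the role of v_{k+1}), with mn edges indexed by the cells, colored
by their column: a degree-two cell {a,b} in column j gives edge ⟨a,b⟩ of color j, a
degree-one cell {a} in column j gives edge ⟨v_{k+1},a⟩ of color j. -/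
theorem stmt10 (m n t k : ℕ)
    (cells : Fin m → Fin n → Finset (Fin k))
    (hne : ∀ i j, (cells i j).Nonempty)
    (hdeg : ∀ i j, (cells i j).card ≤ 2)
    (htol : ∀ E : Finset (Fin n), E.card = t →
      ∀ a : Fin k, Recoverable {s | ∃ i : Fin m, ∃ j : Fin n, j ∉ E ∧ s = cells i j} a) :
    ∃ ends : Fin m × Fin n → Sym2 (Fin (k + 1)),
      (∀ p : Fin m × Fin n, ∀ a b : Fin k, a ≠ b → cells p.1 p.2 = {a, b} →
        ends p = s(a.castSucc, b.castSucc)) ∧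
      (∀ p : Fin m × Fin n, ∀ a : Fin k, cells p.1 p.2 = {a} →
        ends p = s(Fin.last k, a.castSucc)) ∧
      (∀ D : Finset (Fin n), D.card = t →
        ∀ x y : Fin (k + 1),
          Relation.ReflTransGen
            (fun u v => ∃ p : Fin m × Fin n, p.2 ∉ D ∧ ends p = s(u, v)) x y) := by
  classical
  have hchoice : ∀ p : Fin m × Fin n, ∃ e : Sym2 (Fin (k + 1)),
      (∀ a b : Fin k, a ≠ b → cells p.1 p.2 = {a, b} → e = s(a.castSucc, b.castSucc)) ∧
      (∀ a : Fin k, cells p.1 p.2 = {a} → e = s(Fin.last k, a.castSucc)) := by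
    intro p
    have h1 : 1 ≤ (cells p.1 p.2).card := Finset.one_le_card.mpr (hne p.1 p.2)
    have h2 : (cells p.1 p.2).card ≤ 2 := hdeg p.1 p.2
    interval_cases h : (cells p.1 p.2).card
    · obtain ⟨x, hx⟩ := Finset.card_eq_one.mp h
      refine ⟨s(Fin.last k, x.castSucc), ?_, ?_⟩
      · intro a b hab heq
        exfalso
        rw [heq] at h
        rw [Finset.card_pair hab] at h
        omega
      · intro a heq
        rw [heq] at hx
        rw [Finset.singleton_inj.mp hx]
    · obtain ⟨x, y, hxy, hx⟩ := Finset.card_eq_two.mp h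
      refine ⟨s(x.castSucc, y.castSucc), ?_, ?_⟩
      · intro a b hab heq
        rw [heq] at hx
        have hxm : x ∈ ({a, b} : Finset (Fin k)) := by rw [hx]; simp
        have hym : y ∈ ({a, b} : Finset (Fin k)) := by rw [hx]; simp
        simp only [Finset.mem_insert, Finset.mem_singleton] at hxm hym
        rcases hxm with rfl | rfl <;> rcases hym with rfl | rfl
        · exact absurd rfl hxy
        · rfl
        · exact Sym2.eq_swap
        · exact absurd rfl hxy
      · intro a heq
        exfalso
        rw [heq, Finset.card_singleton] at h
        omega
  choose ends hends2 hends1 using hchoice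
  refine ⟨ends, hends2, hends1, ?_⟩
  intro D hD
  set r : Fin (k + 1) → Fin (k + 1) → Prop :=
    fun u v => ∃ p : Fin m × Fin n, p.2 ∉ D ∧ ends p = s(u, v) with hr
  have hrsymm : ∀ u v, r u v → r v u := by
    rintro u v ⟨p, hp, he⟩
    exact ⟨p, hp, by rw [he, Sym2.eq_swap]⟩
  have key : ∀ a : Fin k, Relation.ReflTransGen r a.castSucc (Fin.last k) := by
    intro a
    have hrec := htol D hD a
    induction hrec with
    | step s hs i hi h ih =>
      obtain ⟨i', j', hj', hcell⟩ := hs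
      have h1 : 1 ≤ s.card := Finset.one_le_card.mpr ⟨i, hi⟩
      have h2 : s.card ≤ 2 := hcell ▸ hdeg i' j'
      interval_cases hc : s.card
      · obtain ⟨x, hx⟩ := Finset.card_eq_one.mp hc
        rw [hx, Finset.mem_singleton] at hi
        subst hi
        refine Relation.ReflTransGen.single ?_
        refine hrsymm _ _ ⟨(i', j'), hj', ?_⟩
        exact hends1 (i', j') i (by simpa using hcell ▸ hx.symm ▸ rfl)
      · obtain ⟨x, y, hxy, hx⟩ := Finset.card_eq_two.mp hc
        have hix : i = x ∨ i = y := by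
          have := hi; rw [hx] at this; simpa using this
        -- pick the other element b
        obtain ⟨b, hbne, hbmem, hsab⟩ : ∃ b, b ≠ i ∧ b ∈ s ∧ s = {i, b} := by
          rcases hix with rfl | rfl
          · exact ⟨y, Ne.symm hxy, by rw [hx]; simp, hx⟩
          · exact ⟨x, hxy, by rw [hx]; simp, by rw [hx, Finset.pair_comm]⟩
        have hstep : r i.castSucc b.castSucc := by
          refine ⟨(i', j'), hj', ?_⟩
          exact hends2 (i', j') i b (Ne.symm hbne) (by rw [← hcell, hsab])
        exact Relation.ReflTransGen.head hstep (ih b hbmem hbne)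
  intro x y
  have reach : ∀ z : Fin (k + 1), Relation.ReflTransGen r z (Fin.last k) := by
    intro z
    rcases Fin.eq_castSucc_or_eq_last z with ⟨a, rfl⟩ | rfl
    · exact key a
    · exact Relation.ReflTransGen.refl
  exact (reach x).trans (by haveI : Std.Symm r := ⟨hrsymm⟩; exact Std.Symm.symm _ _ (reach y))
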